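/- Let K be a field of characteristic zero and let α₀, …, α₄ ∈ K be linearly independent over ℚ. Fix j, j' ∈ {0,…,4} with j ≠ j', integers d, D with 1 ≤ d ≤ D, and set z₀ = (α_{j'} − α_j)/d. Then z₀ · ∏_{k=0}^{5D} (5α_j + k·z₀) / ( d · ∏_{(l,k) ∈ A_D} (α_j − α_l + k·z₀) ) = E(d,j,j') · F(j') · I_{j'}^{D−d}(z₀), where A_D = {(l,k) : 0 ≤ l ≤ 4, 0 ≤ k ≤ D, (l,k) ≠ (j,0), (l,k) ≠ (j',d)}, E(d,j,j') = (1/d) · ∏_{k=0}^{5d} (5α_j + k·z₀) / ∏_{(l,k) ∈ A_d} (α_j − α_l + k·z₀), F(j') = ∏_{l≠j'} (α_{j'} − α_l) / (5α_{j'}), and I_{j'}^{e}(z) = z · ∏_{k=0}^{5e} (5α_{j'} + kz) / ∏_{(l,k): 0≤l≤4, 0≤k≤e, (l,k)≠(j',0)} (α_{j'} − α_l + kz). (All denominators appearing are nonzero under the ℚ-linear-independence hypothesis, and the left-hand side is the residue at z = z₀ of the q^D-coefficient I_j^D(z) of the fixed-point-localized I-function.) -/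

import Mathlib

open Finset


lemma quintic_ne3 {K : Type*} [Field K] [CharZero K] (α : Fin 5 → K)
    (hα : LinearIndependent ℚ α) (u v w : Fin 5) (huv : u ≠ v) (huw : u ≠ w) (hvw : v ≠ w)
    (a b c : ℚ) (h : ¬(a = 0 ∧ b = 0 ∧ c = 0)) :
    (a : K) * α u + (b : K) * α v + (c : K) * α w ≠ 0 := by
  intro h0
  set g : Fin 5 → ℚ := fun i => if i = u then a else if i = v then b else if i = w then c else 0
    with hg
  have hsum : ∑ i, g i • α i = (a : K) * α u + (b : K) * α v + (c : K) * α w := by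
    have h1 : ∀ i, g i • α i = (if i = u then (a : K) * α u else 0) +
        ((if i = v then (b : K) * α v else 0) + (if i = w then (c : K) * α w else 0)) := by
      intro i
      by_cases h1 : i = u
      · subst h1; simp [hg, huv, huw, Rat.smul_def]
      · by_cases h2 : i = v
        · subst h2; simp [hg, h1, hvw, Rat.smul_def]
        · by_cases h3 : i = w
          · subst h3; simp [hg, h1, h2, Rat.smul_def]
          · simp [hg, h1, h2, h3]
    rw [Finset.sum_congr rfl (fun i _ => h1 i)]
    simp [Finset.sum_add_distrib, Finset.sum_ite_eq']
    ring
  have hz := Fintype.linearIndependent_iff.mp hα g (by rw [hsum, h0])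
  apply h
  refine ⟨?_, ?_, ?_⟩
  · have := hz u; simpa [hg] using this
  · have := hz v; simpa [hg, Ne.symm huv] using this
  · have := hz w; simpa [hg, Ne.symm huw, Ne.symm hvw] using this

lemma quintic_ne2 {K : Type*} [Field K] [CharZero K] (α : Fin 5 → K)
    (hα : LinearIndependent ℚ α) (u v : Fin 5) (huv : u ≠ v)
    (a b : ℚ) (h : ¬(a = 0 ∧ b = 0)) :
    (a : K) * α u + (b : K) * α v ≠ 0 := by
  have hw : ∃ w : Fin 5, u ≠ w ∧ v ≠ w := by fin_cases u <;> fin_cases v <;> decide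
  obtain ⟨w, huw, hvw⟩ := hw
  have := quintic_ne3 α hα u v w huv huw hvw a b 0 (by tauto)
  simpa using this

/-- The edge-removal residue recursion for the fixed-point-localized I-function of the
quintic threefold: with `z₀ = (α_{j'} - α_j)/d`, the residue at `z = z₀` of the
`q^D`-coefficient `I_j^D(z)` equals `E(d,j,j') · F(j') · I_{j'}^{D-d}(z₀)`. -/
theorem quintic_I_function_edge_removal_recursion {K : Type*} [Field K] [CharZero K]
    (α : Fin 5 → K) (hα : LinearIndependent ℚ α) (j j' : Fin 5) (hjj : j ≠ j')
    (d D : ℕ) (hd : 1 ≤ d) (hdD : d ≤ D) :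
    (((α j' - α j) / d) *
          ∏ k ∈ Finset.range (5 * D + 1), (5 * α j + (k : K) * ((α j' - α j) / d))) /
        ((d : K) *
          ∏ p ∈ (Finset.univ ×ˢ Finset.range (D + 1)).filter
              (fun p : Fin 5 × ℕ => p ≠ (j, 0) ∧ p ≠ (j', d)),
            (α j - α p.1 + (p.2 : K) * ((α j' - α j) / d)))
      = ((1 / (d : K)) *
            (∏ k ∈ Finset.range (5 * d + 1), (5 * α j + (k : K) * ((α j' - α j) / d))) /
            (∏ p ∈ (Finset.univ ×ˢ Finset.range (d + 1)).filter
                (fun p : Fin 5 × ℕ => p ≠ (j, 0) ∧ p ≠ (j', d)),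
              (α j - α p.1 + (p.2 : K) * ((α j' - α j) / d)))) *
        ((∏ l ∈ Finset.univ.erase j', (α j' - α l)) / (5 * α j')) *
        (((α j' - α j) / d) *
            (∏ k ∈ Finset.range (5 * (D - d) + 1),
              (5 * α j' + (k : K) * ((α j' - α j) / d))) /
            (∏ p ∈ (Finset.univ ×ˢ Finset.range ((D - d) + 1)).filter
                (fun p : Fin 5 × ℕ => p ≠ (j', 0)),
              (α j' - α p.1 + (p.2 : K) * ((α j' - α j) / d)))) := by
  have hd0 : (d : K) ≠ 0 := Nat.cast_ne_zero.mpr (by omega)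
  have hdQ : (d : ℚ) ≠ 0 := Nat.cast_ne_zero.mpr (by omega)
  set z : K := (α j' - α j) / (d : K) with hzdef
  have hz : (d : K) * z = α j' - α j := by rw [hzdef]; field_simp
  obtain ⟨e, rfl⟩ : ∃ e, D = d + e := ⟨D - d, by omega⟩
  simp only [Nat.add_sub_cancel_left]
  have hne2 := quintic_ne2 α hα
  have hne3 := quintic_ne3 α hα
  have hαj' : α j' ≠ 0 := hα.ne_zero j'
  have h5 : (5 : K) * α j' ≠ 0 := mul_ne_zero (by norm_num) hαj'
  -- nonvanishing of denominator factors of type α j - α l + k z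
  have hfac : ∀ (l : Fin 5) (k : ℕ), (l, k) ≠ ((j, 0) : Fin 5 × ℕ) →
      (l, k) ≠ ((j', d) : Fin 5 × ℕ) → α j - α l + (k : K) * z ≠ 0 := by
    intro l k h1 h2 h0
    have heq : ((d : K) - k) * α j + (-(d : K)) * α l + (k : K) * α j' = 0 := by
      linear_combination (d : K) * h0 - (k : K) * hz
    rcases eq_or_ne l j with hlj | hlj
    · rw [hlj] at heq h1
      have hk : k ≠ 0 := by
        intro hk0; exact h1 (by rw [hk0])
      refine hne2 j j' hjj (-(k : ℚ)) (k : ℚ) ?_ ?_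
      · rintro ⟨-, hb⟩; exact hk (by exact_mod_cast hb)
      · push_cast; linear_combination heq
    · rcases eq_or_ne l j' with hlj' | hlj'
      · rw [hlj'] at heq h2
        have hk : k ≠ d := by
          intro hk0; exact h2 (by rw [hk0])
        refine hne2 j j' hjj ((d : ℚ) - k) ((k : ℚ) - d) ?_ ?_
        · rintro ⟨ha, -⟩
          apply hk
          have : (k : ℚ) = d := by linarith
          exact_mod_cast this
        · push_cast; linear_combination heq
      · refine hne3 j l j' (Ne.symm hlj) hjj hlj' ((d : ℚ) - k) (-(d : ℚ)) (k : ℚ) ?_ ?_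
        · rintro ⟨-, hb, -⟩; exact hdQ (by linarith)
        · push_cast; linear_combination heq
  -- nonvanishing of factors of type α j' - α l + (i+1) z
  have hfac2 : ∀ (l : Fin 5) (m : ℕ), α j' - α l + ((m : K) + 1) * z ≠ 0 := by
    intro l m h0
    have heq : (-(m : K) - 1) * α j + (-(d : K)) * α l + ((d : K) + m + 1) * α j' = 0 := by
      linear_combination (d : K) * h0 - ((m : K) + 1) * hz
    rcases eq_or_ne l j with hlj | hlj
    · rw [hlj] at heq
      refine hne2 j j' hjj (-(d : ℚ) - m - 1) ((d : ℚ) + m + 1) ?_ ?_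
      · rintro ⟨-, hb⟩
        have : (0:ℚ) < (d : ℚ) + m + 1 := by positivity
        linarith
      · push_cast; linear_combination heq
    · rcases eq_or_ne l j' with hlj' | hlj'
      · rw [hlj'] at heq
        refine hne2 j j' hjj (-(m : ℚ) - 1) ((m : ℚ) + 1) ?_ ?_
        · rintro ⟨-, hb⟩
          have : (0:ℚ) < (m : ℚ) + 1 := by positivity
          linarith
        · push_cast; linear_combination heq
      · refine hne3 j l j' (Ne.symm hlj) hjj hlj' (-(m : ℚ) - 1) (-(d : ℚ)) ((d : ℚ) + m + 1) ?_ ?_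
        · rintro ⟨-, hb, -⟩; exact hdQ (by linarith)
        · push_cast; linear_combination heq
  have hP : (∏ l ∈ Finset.univ.erase j', (α j' - α l)) ≠ 0 := by
    refine Finset.prod_ne_zero_iff.mpr ?_
    intro l hl
    have hl' : l ≠ j' := (Finset.mem_erase.mp hl).1
    intro h0
    refine hne2 j' l (Ne.symm hl') 1 (-1) (by norm_num) ?_
    push_cast; linear_combination h0
  have hDd : (∏ p ∈ (Finset.univ ×ˢ Finset.range (d + 1)).filter
      (fun p : Fin 5 × ℕ => p ≠ (j, 0) ∧ p ≠ (j', d)),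
      (α j - α p.1 + (p.2 : K) * z)) ≠ 0 := by
    refine Finset.prod_ne_zero_iff.mpr ?_
    rintro ⟨l, k⟩ hp
    rw [Finset.mem_filter] at hp
    exact hfac l k hp.2.1 hp.2.2
  have hD2 : (∏ l : Fin 5, ∏ i ∈ Finset.range e, (α j' - α l + ((i : K) + 1) * z)) ≠ 0 := by
    refine Finset.prod_ne_zero_iff.mpr fun l _ => Finset.prod_ne_zero_iff.mpr fun i _ => ?_
    exact hfac2 l i
  -- numerator splitting, LHS
  have hNum : (∏ k ∈ Finset.range (5 * (d + e) + 1), (5 * α j + (k : K) * z))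
      = (∏ k ∈ Finset.range (5 * d + 1), (5 * α j + (k : K) * z)) *
        (∏ i ∈ Finset.range (5 * e), (5 * α j' + ((i : K) + 1) * z)) := by
    rw [show 5 * (d + e) + 1 = (5 * d + 1) + 5 * e from by ring, Finset.prod_range_add]
    congr 1
    refine Finset.prod_congr rfl fun i _ => ?_
    push_cast
    linear_combination (5 : K) * hz
  -- numerator splitting, RHS
  have hNum' : (∏ k ∈ Finset.range (5 * e + 1), (5 * α j' + (k : K) * z))
      = (5 * α j') * ∏ i ∈ Finset.range (5 * e), (5 * α j' + ((i : K) + 1) * z) := by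
    rw [Finset.prod_range_succ', mul_comm]
    congr 1
    · push_cast; ring
    · refine Finset.prod_congr rfl fun i _ => ?_
      push_cast; ring
  -- denominator splitting, LHS
  have hDenL : (∏ p ∈ (Finset.univ ×ˢ Finset.range ((d + e) + 1)).filter
        (fun p : Fin 5 × ℕ => p ≠ (j, 0) ∧ p ≠ (j', d)),
        (α j - α p.1 + (p.2 : K) * z))
      = (∏ p ∈ (Finset.univ ×ˢ Finset.range (d + 1)).filter
          (fun p : Fin 5 × ℕ => p ≠ (j, 0) ∧ p ≠ (j', d)),
          (α j - α p.1 + (p.2 : K) * z)) *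
        (∏ l : Fin 5, ∏ i ∈ Finset.range e, (α j' - α l + ((i : K) + 1) * z)) := by
    rw [Finset.prod_filter, Finset.prod_filter, Finset.prod_product, Finset.prod_product,
      ← Finset.prod_mul_distrib]
    refine Finset.prod_congr rfl fun l _ => ?_
    dsimp only
    rw [show (d + e) + 1 = (d + 1) + e from by ring, Finset.prod_range_add]
    congr 1
    refine Finset.prod_congr rfl fun i _ => ?_
    rw [if_pos]
    · push_cast
      linear_combination hz
    · constructor
      · intro hcon; rw [Prod.mk.injEq] at hcon; omega
      · intro hcon; rw [Prod.mk.injEq] at hcon; omega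
  -- denominator splitting, RHS
  have hPalt : (∏ l ∈ Finset.univ.erase j', (α j' - α l))
      = ∏ l : Fin 5, (if l = j' then 1 else (α j' - α l)) := by
    rw [← Finset.filter_ne', Finset.prod_filter]
    refine Finset.prod_congr rfl fun l _ => ?_
    by_cases h : l = j' <;> simp [h]
  have hDenR : (∏ p ∈ (Finset.univ ×ˢ Finset.range (e + 1)).filter
        (fun p : Fin 5 × ℕ => p ≠ (j', 0)),
        (α j' - α p.1 + (p.2 : K) * z))
      = (∏ l ∈ Finset.univ.erase j', (α j' - α l)) *
        (∏ l : Fin 5, ∏ i ∈ Finset.range e, (α j' - α l + ((i : K) + 1) * z)) := by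
    rw [hPalt, Finset.prod_filter, Finset.prod_product, ← Finset.prod_mul_distrib]
    refine Finset.prod_congr rfl fun l _ => ?_
    dsimp only
    rw [Finset.prod_range_succ', mul_comm]
    congr 1
    · by_cases h : l = j'
      · subst h; simp
      · rw [if_pos, if_neg h]
        · push_cast; ring
        · intro hcon; rw [Prod.mk.injEq] at hcon; exact h hcon.1
    · refine Finset.prod_congr rfl fun i _ => ?_
      rw [if_pos]
      · push_cast; ring
      · intro hcon; rw [Prod.mk.injEq] at hcon; omega
  rw [hNum, hNum', hDenL, hDenR]
  field_simp
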